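/- arXiv:1904.07479 — 2 statements merged into one kernel-verified Lean document; each statement's English description precedes it below -/
import Mathlib

section
/- With the setup of the first-order filter (T·d̂' = −d̂ + d, d̂(0)=0, d̃ = d̂ − d), if d'(t) → 0 as t → ∞, then d̃(t) → 0 as t → ∞. -/
open Filter

/-- First-order filter: if `d'(t) → 0` as `t → ∞`, then the estimation error
`d̃ = d̂ - d` tends to `0` as `t → ∞`. -/
theorem stmt_2
    (d d' dhat dhat' : ℝ → ℝ) (T M : ℝ)
    (hT : 0 < T)
    (hd : ∀ t, HasDerivAt d (d' t) t)
    (hd' : ∀ t, |d' t| ≤ M)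
    (hdhat : ∀ t, HasDerivAt dhat (dhat' t) t)
    (hfilter : ∀ t, T * dhat' t = -dhat t + d t)
    (h0 : dhat 0 = 0)
    (hlim : Tendsto d' atTop (nhds 0)) :
    Tendsto (fun t => dhat t - d t) atTop (nhds 0) := by
  have hTne : T ≠ 0 := ne_of_gt hT
  have hM0 : 0 ≤ M := le_trans (abs_nonneg _) (hd' 0)
  -- measurability and integrability of d'
  have hd'eq : d' = deriv d := funext fun t => ((hd t).deriv).symm
  have hd'meas : Measurable d' := hd'eq ▸ measurable_deriv d
  have hd'int : ∀ a b : ℝ, IntervalIntegrable d' MeasureTheory.volume a b := by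
    intro a b
    refine IntervalIntegrable.mono_fun' (g := fun _ => M) intervalIntegrable_const
      hd'meas.aestronglyMeasurable ?_
    exact Filter.Eventually.of_forall fun x => by simpa [Real.norm_eq_abs] using hd' x
  have hexpc : Continuous fun s : ℝ => Real.exp (s / T) :=
    Real.continuous_exp.comp (continuous_id.div_const T)
  have hint : ∀ a b : ℝ,
      IntervalIntegrable (fun s => Real.exp (s / T) * d' s) MeasureTheory.volume a b := by
    intro a b
    exact (hd'int a b).continuousOn_mul hexpc.continuousOn
  -- the rescaled error F t = exp(t/T) * (dhat t - d t)
  set F : ℝ → ℝ := fun t => Real.exp (t / T) * (dhat t - d t) with hF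
  have hFderiv : ∀ t, HasDerivAt F (-(Real.exp (t / T) * d' t)) t := by
    intro t
    have h1 : HasDerivAt (fun t : ℝ => Real.exp (t / T)) (Real.exp (t / T) * (1 / T)) t := by
      have h : HasDerivAt (fun t : ℝ => t / T) (1 / T) t := (hasDerivAt_id t).div_const T
      simpa using h.exp
    have h2 : HasDerivAt (fun t => dhat t - d t) (dhat' t - d' t) t := (hdhat t).sub (hd t)
    have h3 := h1.mul h2
    convert h3 using 1
    rotate_right
    · have hf := hfilter t
      rw [show dhat' t = (-dhat t + d t) / T from by rw [eq_div_iff hTne]; linarith]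
      ring
    all_goals rfl
  have hFTC : ∀ t : ℝ, F t - F 0 = ∫ s in (0:ℝ)..t, -(Real.exp (s / T) * d' s) := by
    intro t
    exact (intervalIntegral.integral_eq_sub_of_hasDerivAt
      (fun s _ => hFderiv s) ((hint 0 t).neg)).symm
  have key : ∀ t : ℝ, dhat t - d t
      = Real.exp (-(t / T)) * F 0
        - Real.exp (-(t / T)) * ∫ s in (0:ℝ)..t, Real.exp (s / T) * d' s := by
    intro t
    have h := hFTC t
    rw [intervalIntegral.integral_neg] at h
    have hx : Real.exp (-(t / T)) * Real.exp (t / T) = 1 := by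
      rw [← Real.exp_add]; simp
    have h2 : Real.exp (-(t / T)) * F t = dhat t - d t := by
      simp only [hF]; rw [← mul_assoc, hx, one_mul]
    have h3 : F t = F 0 - ∫ s in (0:ℝ)..t, Real.exp (s / T) * d' s := by linarith
    rw [← h2, h3]; ring
  have hgoal : (fun t => dhat t - d t)
      = fun t => Real.exp (-(t / T)) * F 0
        - Real.exp (-(t / T)) * ∫ s in (0:ℝ)..t, Real.exp (s / T) * d' s := funext key
  rw [hgoal]
  -- exp(-(t/T)) → 0
  have hexp0 : Tendsto (fun t : ℝ => Real.exp (-(t / T))) atTop (nhds 0) := by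
    apply Real.tendsto_exp_atBot.comp
    exact tendsto_neg_atTop_atBot.comp (tendsto_id.atTop_div_const hT)
  have hterm1 : Tendsto (fun t : ℝ => Real.exp (-(t / T)) * F 0) atTop (nhds 0) := by
    simpa using hexp0.mul_const (F 0)
  have hterm2 : Tendsto
      (fun t : ℝ => Real.exp (-(t / T)) * ∫ s in (0:ℝ)..t, Real.exp (s / T) * d' s)
      atTop (nhds 0) := by
    rw [Metric.tendsto_atTop]
    intro ε hε
    have hε' : 0 < ε / (2 * T) := by positivity
    obtain ⟨t0', ht0'⟩ := Metric.tendsto_atTop.mp hlim (ε / (2 * T)) hε'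
    set t0 : ℝ := max t0' 0 with ht0def
    have ht00 : (0:ℝ) ≤ t0 := le_max_right _ _
    set C : ℝ := Real.exp (t0 / T) * M * t0 with hC
    have hC0 : 0 ≤ C := by positivity
    have h1 : Tendsto (fun t : ℝ => Real.exp (-(t / T)) * C) atTop (nhds 0) := by
      simpa using hexp0.mul_const C
    obtain ⟨t1, ht1⟩ := Metric.tendsto_atTop.mp h1 (ε / 2) (by positivity)
    refine ⟨max t0 t1, fun t ht => ?_⟩
    have htt0 : t0 ≤ t := le_trans (le_max_left _ _) ht
    have htt1 : t1 ≤ t := le_trans (le_max_right _ _) ht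
    have hsplit : (∫ s in (0:ℝ)..t, Real.exp (s / T) * d' s)
        = (∫ s in (0:ℝ)..t0, Real.exp (s / T) * d' s)
          + ∫ s in t0..t, Real.exp (s / T) * d' s :=
      (intervalIntegral.integral_add_adjacent_intervals (hint 0 t0) (hint t0 t)).symm
    -- bound the first chunk
    have hchunk : ‖∫ s in (0:ℝ)..t0, Real.exp (s / T) * d' s‖ ≤ C := by
      have hb : ∀ s ∈ Set.uIoc (0:ℝ) t0, ‖Real.exp (s / T) * d' s‖ ≤ Real.exp (t0 / T) * M := by
        intro s hs
        rw [Set.uIoc_of_le ht00] at hs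
        have hsle : s / T ≤ t0 / T := by gcongr; exact hs.2
        rw [Real.norm_eq_abs, abs_mul, abs_of_pos (Real.exp_pos _)]
        exact mul_le_mul (Real.exp_le_exp.2 hsle) (hd' s) (abs_nonneg _) (Real.exp_pos _).le
      have := intervalIntegral.norm_integral_le_of_norm_le_const hb
      calc ‖∫ s in (0:ℝ)..t0, Real.exp (s / T) * d' s‖
          ≤ Real.exp (t0 / T) * M * |t0 - 0| := this
        _ = C := by rw [sub_zero, abs_of_nonneg ht00]
    -- bound the tail
    have hcomp : (∫ s in t0..t, Real.exp (s / T))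
        = T * Real.exp (t / T) - T * Real.exp (t0 / T) := by
      have hderiv : ∀ s ∈ Set.uIcc t0 t,
          HasDerivAt (fun u : ℝ => T * Real.exp (u / T)) (Real.exp (s / T)) s := by
        intro s _
        have h : HasDerivAt (fun u : ℝ => u / T) (1 / T) s := (hasDerivAt_id s).div_const T
        have h2 := (h.exp).const_mul T
        convert h2 using 1
        rotate_right
        · rw [one_div, ← mul_assoc, mul_comm T, mul_assoc, mul_inv_cancel₀ hTne, mul_one]
        all_goals rfl
      rw [intervalIntegral.integral_eq_sub_of_hasDerivAt hderiv (hexpc.intervalIntegrable t0 t)]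
    have htail : |∫ s in t0..t, Real.exp (s / T) * d' s|
        ≤ (ε / (2 * T)) * (T * Real.exp (t / T) - T * Real.exp (t0 / T)) := by
      have habs : |∫ s in t0..t, Real.exp (s / T) * d' s|
          ≤ ∫ s in t0..t, |Real.exp (s / T) * d' s| :=
        intervalIntegral.abs_integral_le_integral_abs htt0
      have hmono : (∫ s in t0..t, |Real.exp (s / T) * d' s|)
          ≤ ∫ s in t0..t, (ε / (2 * T)) * Real.exp (s / T) := by
        apply intervalIntegral.integral_mono_on htt0 ((hint t0 t).abs)
          ((hexpc.intervalIntegrable t0 t).const_mul _)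
        intro s hs
        have hs0 : t0' ≤ s := le_trans (le_max_left _ _) hs.1
        have hds := ht0' s hs0
        rw [Real.dist_eq, sub_zero] at hds
        rw [abs_mul, abs_of_pos (Real.exp_pos _)]
        calc Real.exp (s / T) * |d' s|
            ≤ Real.exp (s / T) * (ε / (2 * T)) :=
              mul_le_mul_of_nonneg_left hds.le (Real.exp_pos _).le
          _ = (ε / (2 * T)) * Real.exp (s / T) := mul_comm _ _
      rw [intervalIntegral.integral_const_mul, hcomp] at hmono
      exact le_trans habs hmono
    -- put everything together
    rw [Real.dist_eq, sub_zero]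
    have hEpos : 0 < Real.exp (-(t / T)) := Real.exp_pos _
    have hE1 : Real.exp (-(t / T)) * Real.exp (t / T) = 1 := by
      rw [← Real.exp_add]; simp
    have hEC : Real.exp (-(t / T)) * C < ε / 2 := by
      have := ht1 t htt1
      rw [Real.dist_eq, sub_zero, abs_of_nonneg (by positivity)] at this
      exact this
    have hIbound : |∫ s in (0:ℝ)..t, Real.exp (s / T) * d' s|
        ≤ C + (ε / (2 * T)) * (T * Real.exp (t / T) - T * Real.exp (t0 / T)) := by
      rw [hsplit]
      calc |(∫ s in (0:ℝ)..t0, Real.exp (s / T) * d' s)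
            + ∫ s in t0..t, Real.exp (s / T) * d' s|
          ≤ |∫ s in (0:ℝ)..t0, Real.exp (s / T) * d' s|
            + |∫ s in t0..t, Real.exp (s / T) * d' s| := abs_add_le _ _
        _ ≤ C + (ε / (2 * T)) * (T * Real.exp (t / T) - T * Real.exp (t0 / T)) := by
            have := hchunk
            rw [Real.norm_eq_abs] at this
            exact add_le_add this htail
    rw [abs_mul, abs_of_pos hEpos]
    have habsI : |∫ s in (0:ℝ)..t, Real.exp (s / T) * d' s| =
        |∫ s in (0:ℝ)..t, Real.exp (s / T) * d' s| := rfl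
    have hET : (ε / (2 * T)) * T = ε / 2 := by field_simp
    nlinarith [mul_le_mul_of_nonneg_left hIbound hEpos.le, Real.exp_pos (t0 / T),
      mul_pos hEpos (Real.exp_pos (t0 / T)), hE1, hEC]
  simpa using hterm1.sub hterm2
end

section
/- Consider the augmented inner-loop error system ε' = −K_Θ ε + G e − d̃_Θ, e' = −K_Ω e − C_Ω Gᵀ ε − d̃_τ, d̃_Θ' = −T_Θ^{−1} d̃_Θ, d̃_τ' = −T_Ω^{−1} d̃_τ, where K_Θ, K_Ω, C_Ω, T_Θ, T_Ω are positive-definite diagonal 3×3 matrices and G : ℝ≥0 → ℝ^{3×3} is continuous and bounded. If all diagonal entries satisfy K_i > 0, T_i > 0, c_i > 0 and additionally the quadratic forms K_i x² − x y + (1/T_i) y² are positive definite, then V = ½εᵀε + ½eᵀC_Ω^{−1}e + ½d̃_Θᵀd̃_Θ + ½d̃_τᵀC_Ω^{−1}d̃_τ satisfies V' < 0 away from the origin, and ε(t), e(t), d̃_Θ(t), d̃_τ(t) all converge to 0 as t → ∞. -/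
open Matrix Filter

private lemma quad_coer (k T : ℝ) (hk : 0 < k) (hT : 0 < T)
    (hpd : ∀ x y : ℝ, ¬(x = 0 ∧ y = 0) → k * x^2 - x*y + T⁻¹ * y^2 > 0) :
    ∃ m > 0, ∀ x y : ℝ, m * (x^2 + y^2) ≤ k * x^2 + x*y + T⁻¹ * y^2 := by
  have hT' : 0 < T⁻¹ := inv_pos.mpr hT
  have hKT : 1/4 < k * T⁻¹ := by
    have h1 := hpd 1 (T/2) (by push_neg; intro h; exact absurd h one_ne_zero)
    have h2 : k - T/4 > 0 := by
      have hTne : T ≠ 0 := ne_of_gt hT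
      have : T⁻¹ * (T/2)^2 = T/4 := by field_simp; ring
      nlinarith [h1, this]
    nlinarith [mul_pos h2 hT', mul_pos hT hT', inv_mul_cancel₀ (ne_of_gt hT)]
  set δ := k * T⁻¹ - 1/4 with hδ
  have hδpos : 0 < δ := sub_pos.mpr hKT
  set m := δ / (2 * (k + T⁻¹ + 1)) with hm
  have hden : 0 < 2 * (k + T⁻¹ + 1) := by linarith
  have hmpos : 0 < m := div_pos hδpos hden
  have hmeq : m * (2 * (k + T⁻¹ + 1)) = δ := div_mul_cancel₀ _ (ne_of_gt hden)
  have ha : 0 < k - m := by nlinarith [mul_pos hk hT', hmpos]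
  have hab : 1/4 ≤ (k - m) * (T⁻¹ - m) := by nlinarith [sq_nonneg m, hmpos]
  refine ⟨m, hmpos, fun x y => ?_⟩
  nlinarith [sq_nonneg (2*(k-m)*x + y), sq_nonneg y,
    mul_nonneg (by nlinarith : (0:ℝ) ≤ 4*((k-m)*(T⁻¹-m)) - 1) (sq_nonneg y), ha]

private lemma comp_tendsto {f V : ℝ → ℝ} (C : ℝ) (hV : Tendsto V atTop (nhds 0))
    (hle : ∀ t, (f t)^2 ≤ C * V t) : Tendsto f atTop (nhds 0) := by
  have hsq : Tendsto (fun t => (f t)^2) atTop (nhds 0) := by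
    refine tendsto_of_tendsto_of_tendsto_of_le_of_le tendsto_const_nhds ?_
      (fun t => sq_nonneg _) hle
    simpa using hV.const_mul C
  have habs : Tendsto (fun t => |f t|) atTop (nhds 0) := by
    have h2 := (Real.continuous_sqrt.tendsto 0).comp hsq
    simpa [Function.comp_def, Real.sqrt_sq_eq_abs] using h2
  refine tendsto_of_tendsto_of_tendsto_of_le_of_le ?_ habs
    (fun t => neg_abs_le _) (fun t => le_abs_self _)
  simpa using habs.neg

set_option maxHeartbeats 1600000 in
/-- Augmented inner-loop error system with disturbance-observer errors:
if each block `[[K_i, -1/2],[-1/2, 1/T_i]]` is positive definite, the Lyapunov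
function `V` is strictly decreasing away from the origin and all error signals
converge to zero. -/
theorem stmt_11
    (kΘ kΩ c TΘ TΩ : Fin 3 → ℝ)
    (hkΘ : ∀ i, 0 < kΘ i) (hkΩ : ∀ i, 0 < kΩ i) (hc : ∀ i, 0 < c i)
    (hTΘ : ∀ i, 0 < TΘ i) (hTΩ : ∀ i, 0 < TΩ i)
    (hpdΘ : ∀ i, ∀ x y : ℝ, ¬(x = 0 ∧ y = 0) →
      kΘ i * x^2 - x*y + (TΘ i)⁻¹ * y^2 > 0)
    (hpdΩ : ∀ i, ∀ x y : ℝ, ¬(x = 0 ∧ y = 0) →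
      kΩ i * x^2 - x*y + (TΩ i)⁻¹ * y^2 > 0)
    (G : ℝ → Matrix (Fin 3) (Fin 3) ℝ)
    (hGcont : Continuous G) (MG : ℝ) (hGbdd : ∀ t i j, |G t i j| ≤ MG)
    (ε e dΘ dτ : ℝ → Fin 3 → ℝ)
    (hε : ∀ t, HasDerivAt ε
      (-(diagonal kΘ).mulVec (ε t) + (G t).mulVec (e t) - dΘ t) t)
    (he : ∀ t, HasDerivAt e
      (-(diagonal kΩ).mulVec (e t) - (diagonal c).mulVec ((G t)ᵀ.mulVec (ε t))
        - dτ t) t)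
    (hdΘ : ∀ t, HasDerivAt dΘ (-(diagonal fun i => (TΘ i)⁻¹).mulVec (dΘ t)) t)
    (hdτ : ∀ t, HasDerivAt dτ (-(diagonal fun i => (TΩ i)⁻¹).mulVec (dτ t)) t)
    (V : ℝ → ℝ)
    (hV : ∀ t, V t = (1/2) * (ε t ⬝ᵥ ε t)
      + (1/2) * (e t ⬝ᵥ (diagonal fun i => (c i)⁻¹).mulVec (e t))
      + (1/2) * (dΘ t ⬝ᵥ dΘ t)
      + (1/2) * (dτ t ⬝ᵥ (diagonal fun i => (c i)⁻¹).mulVec (dτ t))) :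
    (∀ t, ¬(ε t = 0 ∧ e t = 0 ∧ dΘ t = 0 ∧ dτ t = 0) → deriv V t < 0) ∧
    Tendsto ε atTop (nhds 0) ∧ Tendsto e atTop (nhds 0) ∧
    Tendsto dΘ atTop (nhds 0) ∧ Tendsto dτ atTop (nhds 0) := by
  classical
  -- component derivatives
  have hεi : ∀ t i, HasDerivAt (fun s => ε s i)
      (-(kΘ i * ε t i) + (∑ j, G t i j * e t j) - dΘ t i) t := by
    intro t i
    have h := hasDerivAt_pi.mp (hε t) i
    simp only [Pi.add_apply, Pi.sub_apply, Pi.neg_apply, Matrix.mulVec_diagonal] at h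
    simpa [Matrix.mulVec, dotProduct] using h
  have hei : ∀ t i, HasDerivAt (fun s => e s i)
      (-(kΩ i * e t i) - c i * (∑ j, G t j i * ε t j) - dτ t i) t := by
    intro t i
    have h := hasDerivAt_pi.mp (he t) i
    simp only [Pi.add_apply, Pi.sub_apply, Pi.neg_apply, Matrix.mulVec_diagonal] at h
    simpa [Matrix.mulVec, dotProduct, Matrix.transpose_apply] using h
  have hdΘi : ∀ t i, HasDerivAt (fun s => dΘ s i) (-((TΘ i)⁻¹ * dΘ t i)) t := by
    intro t i
    have h := hasDerivAt_pi.mp (hdΘ t) i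
    simpa [Matrix.mulVec_diagonal] using h
  have hdτi : ∀ t i, HasDerivAt (fun s => dτ s i) (-((TΩ i)⁻¹ * dτ t i)) t := by
    intro t i
    have h := hasDerivAt_pi.mp (hdτ t) i
    simpa [Matrix.mulVec_diagonal] using h
  -- explicit form of V
  have hVfun : V = fun t => ∑ i, ((1/2) * (ε t i * ε t i)
      + 1/2 * (c i)⁻¹ * (e t i * e t i) + (1/2) * (dΘ t i * dΘ t i)
      + 1/2 * (c i)⁻¹ * (dτ t i * dτ t i)) := by
    funext t
    rw [hV t]
    simp only [dotProduct, Matrix.mulVec_diagonal, Finset.mul_sum,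
      ← Finset.sum_add_distrib]
    exact Finset.sum_congr rfl fun i _ => by ring
  -- the derivative of V
  set DD : ℝ → ℝ := fun t => ∑ i,
      (-(kΘ i * (ε t i)^2 + ε t i * dΘ t i + (TΘ i)⁻¹ * (dΘ t i)^2)
        - (c i)⁻¹ * (kΩ i * (e t i)^2 + e t i * dτ t i + (TΩ i)⁻¹ * (dτ t i)^2))
    with hDD
  have hVD : ∀ t, HasDerivAt V (DD t) t := by
    intro t
    have key : (∑ i, ε t i * ∑ j, G t i j * e t j)
        = ∑ i, e t i * ∑ j, G t j i * ε t j := by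
      simp_rw [Finset.mul_sum]
      rw [Finset.sum_comm]
      exact Finset.sum_congr rfl fun i _ => Finset.sum_congr rfl fun j _ => by ring
    have hsum : HasDerivAt (fun t => ∑ i, ((1/2) * (ε t i * ε t i)
        + 1/2 * (c i)⁻¹ * (e t i * e t i) + (1/2) * (dΘ t i * dΘ t i)
        + 1/2 * (c i)⁻¹ * (dτ t i * dτ t i)))
        (∑ i, ((1/2) * ((-(kΘ i * ε t i) + (∑ j, G t i j * e t j) - dΘ t i) * ε t i
            + ε t i * (-(kΘ i * ε t i) + (∑ j, G t i j * e t j) - dΘ t i))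
          + 1/2 * (c i)⁻¹ * ((-(kΩ i * e t i) - c i * (∑ j, G t j i * ε t j) - dτ t i) * e t i
            + e t i * (-(kΩ i * e t i) - c i * (∑ j, G t j i * ε t j) - dτ t i))
          + (1/2) * (-((TΘ i)⁻¹ * dΘ t i) * dΘ t i + dΘ t i * -((TΘ i)⁻¹ * dΘ t i))
          + 1/2 * (c i)⁻¹ * (-((TΩ i)⁻¹ * dτ t i) * dτ t i
            + dτ t i * -((TΩ i)⁻¹ * dτ t i)))) t := by
      apply HasDerivAt.fun_sum
      intro i _
      exact (((((hεi t i).mul (hεi t i)).const_mul (1/2)).add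
          (((hei t i).mul (hei t i)).const_mul (1/2 * (c i)⁻¹))).add
          (((hdΘi t i).mul (hdΘi t i)).const_mul (1/2))).add
          (((hdτi t i).mul (hdτi t i)).const_mul (1/2 * (c i)⁻¹))
    have heq : (∑ i, ((1/2) * ((-(kΘ i * ε t i) + (∑ j, G t i j * e t j) - dΘ t i) * ε t i
            + ε t i * (-(kΘ i * ε t i) + (∑ j, G t i j * e t j) - dΘ t i))
          + 1/2 * (c i)⁻¹ * ((-(kΩ i * e t i) - c i * (∑ j, G t j i * ε t j) - dτ t i) * e t i
            + e t i * (-(kΩ i * e t i) - c i * (∑ j, G t j i * ε t j) - dτ t i))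
          + (1/2) * (-((TΘ i)⁻¹ * dΘ t i) * dΘ t i + dΘ t i * -((TΘ i)⁻¹ * dΘ t i))
          + 1/2 * (c i)⁻¹ * (-((TΩ i)⁻¹ * dτ t i) * dτ t i
            + dτ t i * -((TΩ i)⁻¹ * dτ t i)))) = DD t := by
      simp only [hDD]
      trans (∑ i, ((-(kΘ i * (ε t i)^2 + ε t i * dΘ t i + (TΘ i)⁻¹ * (dΘ t i)^2)
          - (c i)⁻¹ * (kΩ i * (e t i)^2 + e t i * dτ t i + (TΩ i)⁻¹ * (dτ t i)^2))
          + ε t i * (∑ j, G t i j * e t j) - e t i * (∑ j, G t j i * ε t j)))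
      · refine Finset.sum_congr rfl fun i _ => ?_
        have hinv : (c i)⁻¹ * c i = 1 := inv_mul_cancel₀ (ne_of_gt (hc i))
        linear_combination (-(e t i * ∑ j, G t j i * ε t j)) * hinv
      · rw [Finset.sum_sub_distrib, Finset.sum_add_distrib, key]
        ring
    rw [hVfun]
    exact heq ▸ hsum
  -- nonnegativity facts for the quadratic blocks
  have pospartΘ : ∀ (x y : ℝ) i, ¬(x = 0 ∧ y = 0) →
      0 < kΘ i * x^2 + x*y + (TΘ i)⁻¹ * y^2 := by
    intro x y i h
    have h2 := hpdΘ i x (-y) (by simpa [neg_eq_zero] using h)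
    nlinarith [h2]
  have pospartΩ : ∀ (x y : ℝ) i, ¬(x = 0 ∧ y = 0) →
      0 < kΩ i * x^2 + x*y + (TΩ i)⁻¹ * y^2 := by
    intro x y i h
    have h2 := hpdΩ i x (-y) (by simpa [neg_eq_zero] using h)
    nlinarith [h2]
  have nnΘ : ∀ (x y : ℝ) i, 0 ≤ kΘ i * x^2 + x*y + (TΘ i)⁻¹ * y^2 := by
    intro x y i
    by_cases h : x = 0 ∧ y = 0
    · obtain ⟨hx, hy⟩ := h; simp [hx, hy]
    · exact (pospartΘ x y i h).le
  have nnΩ : ∀ (x y : ℝ) i, 0 ≤ kΩ i * x^2 + x*y + (TΩ i)⁻¹ * y^2 := by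
    intro x y i
    by_cases h : x = 0 ∧ y = 0
    · obtain ⟨hx, hy⟩ := h; simp [hx, hy]
    · exact (pospartΩ x y i h).le
  -- Part 1 : strict decrease away from the origin
  have part1 : ∀ t, ¬(ε t = 0 ∧ e t = 0 ∧ dΘ t = 0 ∧ dτ t = 0) → deriv V t < 0 := by
    intro t hne0
    rw [(hVD t).deriv]
    have hex : ∃ i, ¬(ε t i = 0 ∧ dΘ t i = 0) ∨ ¬(e t i = 0 ∧ dτ t i = 0) := by
      by_contra h
      push_neg at h
      exact hne0 ⟨funext fun i => (h i).1.1, funext fun i => (h i).2.1,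
        funext fun i => (h i).1.2, funext fun i => (h i).2.2⟩
    obtain ⟨i0, hi0⟩ := hex
    simp only [hDD]
    have hle : ∀ i : Fin 3,
        (-(kΘ i * (ε t i)^2 + ε t i * dΘ t i + (TΘ i)⁻¹ * (dΘ t i)^2)
          - (c i)⁻¹ * (kΩ i * (e t i)^2 + e t i * dτ t i + (TΩ i)⁻¹ * (dτ t i)^2))
        ≤ 0 := by
      intro i
      have h1 := nnΘ (ε t i) (dΘ t i) i
      have h2 := mul_nonneg (inv_nonneg.mpr (hc i).le) (nnΩ (e t i) (dτ t i) i)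
      linarith
    have hlt : (-(kΘ i0 * (ε t i0)^2 + ε t i0 * dΘ t i0 + (TΘ i0)⁻¹ * (dΘ t i0)^2)
          - (c i0)⁻¹ * (kΩ i0 * (e t i0)^2 + e t i0 * dτ t i0 + (TΩ i0)⁻¹ * (dτ t i0)^2))
        < 0 := by
      rcases hi0 with h | h
      · have h1 := pospartΘ (ε t i0) (dΘ t i0) i0 h
        have h2 := mul_nonneg (inv_nonneg.mpr (hc i0).le) (nnΩ (e t i0) (dτ t i0) i0)
        linarith
      · have h1 := nnΘ (ε t i0) (dΘ t i0) i0
        have h2 := mul_pos (inv_pos.mpr (hc i0)) (pospartΩ (e t i0) (dτ t i0) i0 h)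
        linarith
    calc (∑ i, (-(kΘ i * (ε t i)^2 + ε t i * dΘ t i + (TΘ i)⁻¹ * (dΘ t i)^2)
          - (c i)⁻¹ * (kΩ i * (e t i)^2 + e t i * dτ t i + (TΩ i)⁻¹ * (dτ t i)^2)))
        < ∑ _i : Fin 3, (0:ℝ) :=
          Finset.sum_lt_sum (fun i _ => hle i) ⟨i0, Finset.mem_univ i0, hlt⟩
      _ = 0 := by simp
  -- coercivity constants
  choose mΘ hmΘpos hmΘ using fun i => quad_coer (kΘ i) (TΘ i) (hkΘ i) (hTΘ i) (hpdΘ i)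
  choose mΩ hmΩpos hmΩ using fun i => quad_coer (kΩ i) (TΩ i) (hkΩ i) (hTΩ i) (hpdΩ i)
  have hune : (Finset.univ : Finset (Fin 3)).Nonempty := Finset.univ_nonempty
  set α := Finset.univ.inf' hune (fun i => min (2 * mΘ i) (2 * mΩ i)) with hαdef
  have hαpos : 0 < α := by
    rw [hαdef, Finset.lt_inf'_iff]
    intro i _
    exact lt_min (by linarith [hmΘpos i]) (by linarith [hmΩpos i])
  have hαΘ : ∀ i, α ≤ 2 * mΘ i := fun i =>
    le_trans (Finset.inf'_le _ (Finset.mem_univ i)) (min_le_left _ _)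
  have hαΩ : ∀ i, α ≤ 2 * mΩ i := fun i =>
    le_trans (Finset.inf'_le _ (Finset.mem_univ i)) (min_le_right _ _)
  -- differential inequality
  have hDle : ∀ t, DD t + α * V t ≤ 0 := by
    intro t
    simp only [hDD, hVfun]
    rw [Finset.mul_sum, ← Finset.sum_add_distrib]
    apply Finset.sum_nonpos
    intro i _
    have hci : 0 < (c i)⁻¹ := inv_pos.mpr (hc i)
    have h1 := hmΘ i (ε t i) (dΘ t i)
    have h2 := hmΩ i (e t i) (dτ t i)
    have hA : α * ((ε t i)^2 + (dΘ t i)^2)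
        ≤ 2 * (kΘ i * (ε t i)^2 + ε t i * dΘ t i + (TΘ i)⁻¹ * (dΘ t i)^2) := by
      nlinarith [mul_le_mul_of_nonneg_right (hαΘ i)
        (by positivity : (0:ℝ) ≤ (ε t i)^2 + (dΘ t i)^2), h1]
    have hB : α * ((e t i)^2 + (dτ t i)^2)
        ≤ 2 * (kΩ i * (e t i)^2 + e t i * dτ t i + (TΩ i)⁻¹ * (dτ t i)^2) := by
      nlinarith [mul_le_mul_of_nonneg_right (hαΩ i)
        (by positivity : (0:ℝ) ≤ (e t i)^2 + (dτ t i)^2), h2]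
    have hB' := mul_le_mul_of_nonneg_left hB hci.le
    nlinarith [hA, hB']
  -- the function V·exp(αt) is antitone
  have hVnn : ∀ t, 0 ≤ V t := by
    intro t
    simp only [hVfun]
    apply Finset.sum_nonneg
    intro i _
    have h1 := mul_self_nonneg (ε t i)
    have h2 := mul_self_nonneg (e t i)
    have h3 := mul_self_nonneg (dΘ t i)
    have h4 := mul_self_nonneg (dτ t i)
    have hci : (0:ℝ) ≤ (c i)⁻¹ := (inv_pos.mpr (hc i)).le
    have h2' := mul_nonneg hci h2
    have h4' := mul_nonneg hci h4
    nlinarith [h1, h3, h2', h4']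
  have hgD : ∀ t, HasDerivAt (fun t => V t * Real.exp (α * t))
      (DD t * Real.exp (α * t) + V t * (Real.exp (α * t) * (α * 1))) t :=
    fun t => (hVD t).mul (((hasDerivAt_id t).const_mul α).exp)
  have hganti : Antitone (fun t => V t * Real.exp (α * t)) := by
    apply antitone_of_deriv_nonpos
    · intro t; exact (hgD t).differentiableAt
    · intro t
      rw [(hgD t).deriv]
      have h1 : (DD t + α * V t) * Real.exp (α * t) ≤ 0 :=
        mul_nonpos_iff.mpr (Or.inr ⟨hDle t, (Real.exp_pos _).le⟩)
      nlinarith [h1]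
  have hVle : ∀ t, 0 ≤ t → V t ≤ V 0 * Real.exp (-(α * t)) := by
    intro t ht
    have h0 := hganti ht
    simp only [mul_zero, Real.exp_zero, mul_one] at h0
    have hexp := Real.exp_pos (α * t)
    rw [Real.exp_neg, ← div_eq_mul_inv, le_div_iff₀ hexp]
    exact h0
  have hVtend : Tendsto V atTop (nhds 0) := by
    have h1 : Tendsto (fun t : ℝ => α * t) atTop atTop :=
      Tendsto.const_mul_atTop hαpos tendsto_id
    have h2 : Tendsto (fun t : ℝ => Real.exp (-(α * t))) atTop (nhds 0) :=
      Real.tendsto_exp_neg_atTop_nhds_zero.comp h1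
    have h3 : Tendsto (fun t : ℝ => V 0 * Real.exp (-(α * t))) atTop (nhds 0) := by
      simpa using h2.const_mul (V 0)
    refine tendsto_of_tendsto_of_tendsto_of_le_of_le' tendsto_const_nhds h3
      (Eventually.of_forall hVnn) ?_
    filter_upwards [eventually_ge_atTop (0:ℝ)] with t ht using hVle t ht
  -- componentwise bounds by V
  have hbound : ∀ (i : Fin 3) t,
      (ε t i)^2 ≤ 2 * V t ∧ (e t i)^2 ≤ (2 * c i) * V t ∧
      (dΘ t i)^2 ≤ 2 * V t ∧ (dτ t i)^2 ≤ (2 * c i) * V t := by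
    intro i t
    have hsingle : ((1/2) * (ε t i * ε t i)
        + 1/2 * (c i)⁻¹ * (e t i * e t i) + (1/2) * (dΘ t i * dΘ t i)
        + 1/2 * (c i)⁻¹ * (dτ t i * dτ t i)) ≤ V t := by
      simp only [hVfun]
      refine Finset.single_le_sum (f := fun j => (1/2) * (ε t j * ε t j)
        + 1/2 * (c j)⁻¹ * (e t j * e t j) + (1/2) * (dΘ t j * dΘ t j)
        + 1/2 * (c j)⁻¹ * (dτ t j * dτ t j)) (fun j _ => ?_) (Finset.mem_univ i)
      have hci : (0:ℝ) ≤ (c j)⁻¹ := (inv_pos.mpr (hc j)).le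
      nlinarith [mul_self_nonneg (ε t j), mul_self_nonneg (dΘ t j),
        mul_nonneg hci (mul_self_nonneg (e t j)),
        mul_nonneg hci (mul_self_nonneg (dτ t j))]
    have hci : (0:ℝ) ≤ (c i)⁻¹ := (inv_pos.mpr (hc i)).le
    have hcc : c i * (c i)⁻¹ = 1 := mul_inv_cancel₀ (ne_of_gt (hc i))
    have hnn1 := mul_self_nonneg (ε t i)
    have hnn2 := mul_nonneg hci (mul_self_nonneg (e t i))
    have hnn3 := mul_self_nonneg (dΘ t i)
    have hnn4 := mul_nonneg hci (mul_self_nonneg (dτ t i))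
    refine ⟨by nlinarith [hsingle], ?_, by nlinarith [hsingle], ?_⟩
    · nlinarith [mul_le_mul_of_nonneg_left hsingle (by linarith [hc i] : (0:ℝ) ≤ 2 * c i),
        hcc, sq_nonneg (e t i), hc i, hVnn t]
    · nlinarith [mul_le_mul_of_nonneg_left hsingle (by linarith [hc i] : (0:ℝ) ≤ 2 * c i),
        hcc, sq_nonneg (dτ t i), hc i, hVnn t]
  refine ⟨part1, ?_, ?_, ?_, ?_⟩
  · exact tendsto_pi_nhds.mpr fun i =>
      comp_tendsto 2 hVtend (fun t => (hbound i t).1)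
  · exact tendsto_pi_nhds.mpr fun i =>
      comp_tendsto (2 * c i) hVtend (fun t => (hbound i t).2.1)
  · exact tendsto_pi_nhds.mpr fun i =>
      comp_tendsto 2 hVtend (fun t => (hbound i t).2.2.1)
  · exact tendsto_pi_nhds.mpr fun i =>
      comp_tendsto (2 * c i) hVtend (fun t => (hbound i t).2.2.2)
end
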